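/- arXiv:2408.08262 — 2 statements merged into one kernel-verified Lean document; each statement's English description precedes it below -/
import Mathlib

section
/- On a 1D structured grid with a pure upwind advection discretization (lower bidiagonal matrix with nonzero diagonal), choosing F-points as every second point yields a diagonal A_ff, and the ideal-operator coarse matrix R A P is again lower bidiagonal. -/
open Matrix

/-- On a 1D structured grid with a pure upwind advection discretization (`A` lower
bidiagonal with nonzero diagonal), choosing F-points as every second point (odd
indices) yields a diagonal `A_ff`, and the ideal-operator coarse matrix `R A P`
(equivalently the Schur complement on the even points) is again lower bidiagonal:
its entry at coarse points `c₁, c₂` vanishes unless `c₂ = c₁` or `c₂ + 2 = c₁`. -/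
theorem upwind_1d_ideal_coarsening {n : ℕ}
    (A : Matrix (Fin n) (Fin n) ℝ)
    (hbd : ∀ i j : Fin n, A i j ≠ 0 → ((j : ℕ) = i ∨ (j : ℕ) + 1 = i))
    (hdiag : ∀ i, A i i ≠ 0) :
    (A.submatrix (fun i : {x : Fin n // (x : ℕ) % 2 = 1} => (i : Fin n))
        (fun j : {x : Fin n // (x : ℕ) % 2 = 1} => (j : Fin n))).IsDiag ∧
    (let F := {x : Fin n // (x : ℕ) % 2 = 1}
     let C := {x : Fin n // (x : ℕ) % 2 = 0}
     let Aff : Matrix F F ℝ := A.submatrix (fun i => (i : Fin n)) (fun j => (j : Fin n))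
     let Afc : Matrix F C ℝ := A.submatrix (fun i => (i : Fin n)) (fun j => (j : Fin n))
     let Acf : Matrix C F ℝ := A.submatrix (fun i => (i : Fin n)) (fun j => (j : Fin n))
     let Acc : Matrix C C ℝ := A.submatrix (fun i => (i : Fin n)) (fun j => (j : Fin n))
     let R : Matrix C (F ⊕ C) ℝ := Matrix.fromCols (-(Acf * Aff⁻¹)) 1
     let P : Matrix (F ⊕ C) C ℝ := Matrix.fromRows (-(Aff⁻¹ * Afc)) 1
     let coarse : Matrix C C ℝ := R * Matrix.fromBlocks Aff Afc Acf Acc * P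
     ∀ c₁ c₂ : C, coarse c₁ c₂ ≠ 0 →
       ((c₂ : Fin n) : ℕ) = ((c₁ : Fin n) : ℕ) ∨
       ((c₂ : Fin n) : ℕ) + 2 = ((c₁ : Fin n) : ℕ)) := by
  have hdiagF : (A.submatrix (fun i : {x : Fin n // (x : ℕ) % 2 = 1} => (i : Fin n))
      (fun j : {x : Fin n // (x : ℕ) % 2 = 1} => (j : Fin n))).IsDiag := by
    intro i j hij
    by_contra h
    have h' : A (i : Fin n) (j : Fin n) ≠ 0 := h
    have hi := i.2
    have hj := j.2
    rcases hbd _ _ h' with h1 | h1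
    · exact hij (Subtype.ext (Fin.ext h1.symm))
    · omega
  refine ⟨hdiagF, ?_⟩
  intro F C Aff Afc Acf Acc R P coarse c₁ c₂ hne
  have hAffd : Aff = diagonal Aff.diag := hdiagF.diagonal_diag.symm
  have hdet : IsUnit Aff.det := by
    rw [hAffd, det_diagonal]
    exact isUnit_iff_ne_zero.mpr (Finset.prod_ne_zero_iff.mpr fun f _ => hdiag _)
  have hinv : Aff⁻¹ = diagonal (Ring.inverse Aff.diag) := by
    conv_lhs => rw [hAffd]
    rw [inv_diagonal]
  have hcoarse : coarse = -(Acf * Aff⁻¹ * Afc) + Acc := by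
    show Matrix.fromCols (-(Acf * Aff⁻¹)) 1 * Matrix.fromBlocks Aff Afc Acf Acc *
      Matrix.fromRows (-(Aff⁻¹ * Afc)) 1 = _
    rw [fromCols_mul_fromBlocks, fromCols_mul_fromRows]
    have h1 : -(Acf * Aff⁻¹) * Aff + (1 : Matrix C C ℝ) * Acf = 0 := by
      rw [Matrix.one_mul, Matrix.neg_mul, Matrix.mul_assoc, Matrix.nonsing_inv_mul _ hdet,
        Matrix.mul_one, neg_add_cancel]
    rw [h1, Matrix.zero_mul, Matrix.one_mul, Matrix.mul_one, zero_add, Matrix.neg_mul]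
  have hent : coarse c₁ c₂ =
      -(∑ f : F, A c₁ f * Aff⁻¹ f f * A f c₂) + A c₁ c₂ := by
    rw [hcoarse]
    show -(Acf * Aff⁻¹ * Afc) c₁ c₂ + Acc c₁ c₂ = _
    congr 1
    rw [Matrix.mul_apply]
    congr 1
    refine Finset.sum_congr rfl fun f _ => ?_
    rw [hinv, Matrix.mul_diagonal, Matrix.diagonal_apply_eq]; rfl
  rw [hent] at hne
  have hi1 := c₁.2
  have hi2 := c₂.2
  by_cases hd : A c₁ c₂ = 0
  · rw [hd, add_zero, neg_ne_zero] at hne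
    obtain ⟨f, _, hf⟩ := Finset.exists_ne_zero_of_sum_ne_zero hne
    have h1 : A c₁ f ≠ 0 := fun h => hf (by rw [h]; ring)
    have h2 : A f c₂ ≠ 0 := fun h => hf (by rw [h]; ring)
    have e1 := hbd _ _ h1
    have e2 := hbd _ _ h2
    have hf2 := f.2
    omega
  · rcases hbd _ _ hd with h | h
    · exact Or.inl h
    · omega
end

section
/- Error propagation of exact F-point smoothing followed by an exact coarse-grid correction with ideal operators is zero: for A = [[A_ff, A_fc],[A_cf, A_cc]] with A_ff invertible and Schur complement S = A_cc − A_cf A_ff^{-1} A_fc invertible, the two-grid error operator (I − P S^{-1} R A)(I − M A) vanishes, where M = [[A_ff^{-1}, 0],[0,0]], R = [−A_cf A_ff^{-1}, I], P = [−A_ff^{-1} A_fc ; I]. -/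
open Matrix

/-- Exact F-point smoothing followed by an exact coarse-grid correction with the
ideal operators annihilates the error: `(I - P S⁻¹ R A)(I - M A) = 0`, where
`M = [[A_ff⁻¹,0],[0,0]]` is the exact F-point smoother, `R`, `P` are the ideal
restriction/prolongation and `S` is the (invertible) Schur complement. -/
theorem ideal_two_grid_exact {nF nC : ℕ}
    (Aff : Matrix (Fin nF) (Fin nF) ℝ) (Afc : Matrix (Fin nF) (Fin nC) ℝ)
    (Acf : Matrix (Fin nC) (Fin nF) ℝ) (Acc : Matrix (Fin nC) (Fin nC) ℝ)
    (hAff : IsUnit Aff.det) (hS : IsUnit (Acc - Acf * Aff⁻¹ * Afc).det) :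
    (1 - Matrix.fromRows (-(Aff⁻¹ * Afc)) (1 : Matrix (Fin nC) (Fin nC) ℝ) *
          (Acc - Acf * Aff⁻¹ * Afc)⁻¹ *
          Matrix.fromCols (-(Acf * Aff⁻¹)) (1 : Matrix (Fin nC) (Fin nC) ℝ) *
          Matrix.fromBlocks Aff Afc Acf Acc) *
      (1 - Matrix.fromBlocks Aff⁻¹ 0 0 0 * Matrix.fromBlocks Aff Afc Acf Acc) = 0 := by
  have h1 : Aff⁻¹ * Aff = 1 := nonsing_inv_mul Aff hAff
  have h2 : Aff * Aff⁻¹ = 1 := mul_nonsing_inv Aff hAff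
  have h3 : (Acc - Acf * Aff⁻¹ * Afc)⁻¹ * (Acc - Acf * Aff⁻¹ * Afc) = 1 :=
    nonsing_inv_mul _ hS
  have hRA : Matrix.fromCols (-(Acf * Aff⁻¹)) (1 : Matrix (Fin nC) (Fin nC) ℝ) *
      Matrix.fromBlocks Aff Afc Acf Acc =
      Matrix.fromCols 0 (Acc - Acf * Aff⁻¹ * Afc) := by
    rw [fromCols_mul_fromBlocks]
    simp [Matrix.mul_assoc, h1, neg_add_eq_sub]
  calc (1 - Matrix.fromRows (-(Aff⁻¹ * Afc)) (1 : Matrix (Fin nC) (Fin nC) ℝ) *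
          (Acc - Acf * Aff⁻¹ * Afc)⁻¹ *
          Matrix.fromCols (-(Acf * Aff⁻¹)) (1 : Matrix (Fin nC) (Fin nC) ℝ) *
          Matrix.fromBlocks Aff Afc Acf Acc) *
      (1 - Matrix.fromBlocks Aff⁻¹ 0 0 0 * Matrix.fromBlocks Aff Afc Acf Acc)
      = (1 - Matrix.fromRows (-(Aff⁻¹ * Afc)) (1 : Matrix (Fin nC) (Fin nC) ℝ) *
          ((Acc - Acf * Aff⁻¹ * Afc)⁻¹ *
          (Matrix.fromCols (-(Acf * Aff⁻¹)) (1 : Matrix (Fin nC) (Fin nC) ℝ) *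
          Matrix.fromBlocks Aff Afc Acf Acc))) *
      (1 - Matrix.fromBlocks Aff⁻¹ 0 0 0 * Matrix.fromBlocks Aff Afc Acf Acc) := by
        rw [Matrix.mul_assoc, Matrix.mul_assoc]
    _ = 0 := by
        rw [hRA, mul_fromCols, Matrix.mul_zero]
        rw [h3, fromRows_mul_fromCols, fromBlocks_multiply]
        have hone : (1 : Matrix (Fin nF ⊕ Fin nC) (Fin nF ⊕ Fin nC) ℝ) =
          Matrix.fromBlocks 1 0 0 1 := by simp [Matrix.fromBlocks_one]
        rw [hone]
        simp only [sub_eq_add_neg, Matrix.fromBlocks_neg, Matrix.fromBlocks_add,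
          Matrix.fromBlocks_multiply]
        simp [Matrix.mul_assoc, h1]
end
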